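/- Assume d^* < ∞, C₀ := sup_k (1/d_k) ∫_{Δ_k} |q(x)| dx < ∞ and C₁ := sup_k |β_k|^{−1} / min{d_k, d_{k+1}} < ∞. Then the potential and jump forms are infinitesimally form bounded with respect to the broken Dirichlet form: for every ε > 0 there exists C(ε) > 0 such that every piecewise H¹ function f with Σ_k ∫_{Δ_k}(|f'(x)|² + |f(x)|²) dx < ∞ satisfies ∫₀^∞ |q(x)| |f(x)|² dx + Σ_k |f(x_k+) − f(x_k−)|² / |β_k| ≤ ε · Σ_k ∫_{Δ_k}(|f'(x)|² + |f(x)|²) dx + C(ε) ∫₀^∞ |f(x)|² dx. -/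

import Mathlib

open MeasureTheory Set Filter

section Helpers

lemma cs_lemma (J : Set ℝ) (hJ : MeasurableSet J) (hfin : volume J ≠ ⊤)
    (δ : ℝ) (hμ : (volume J).toReal ≤ δ) (g : ℝ → ℝ)
    (hg1 : IntegrableOn g J) (hg2 : IntegrableOn (fun t => g t ^ 2) J) :
    (∫ t in J, |g t|) ^ 2 ≤ δ * ∫ t in J, g t ^ 2 := by
  set m := (volume J).toReal with hm
  have hm0 : 0 ≤ m := ENNReal.toReal_nonneg
  set I := ∫ t in J, |g t| with hI
  set G := ∫ t in J, g t ^ 2 with hG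
  have hI0 : 0 ≤ I := setIntegral_nonneg hJ fun t _ => abs_nonneg _
  have hG0 : 0 ≤ G := setIntegral_nonneg hJ fun t _ => sq_nonneg _
  have main : I ^ 2 ≤ m * G := by
    rcases eq_or_lt_of_le hG0 with hGz | hGpos
    · -- G = 0, so g = 0 a.e. on J
      have : (fun t => g t ^ 2) =ᵐ[volume.restrict J] 0 := by
        rw [← integral_eq_zero_iff_of_nonneg_ae ?_ hg2]
        · exact hGz.symm
        · filter_upwards with t using sq_nonneg _
      have hIz : I = 0 := by
        rw [hI]
        rw [integral_eq_zero_iff_of_nonneg_ae ?_ hg1.abs]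
        · filter_upwards [this] with t ht
          have : g t = 0 := by
            have := pow_eq_zero_iff (n := 2) (by norm_num) |>.mp ht
            exact this
          simp [this]
        · filter_upwards with t using abs_nonneg _
      rw [hIz, ← hGz]
      simp
    · rcases eq_or_lt_of_le hm0 with hmz | hmpos
      · -- measure zero
        have : volume J = 0 := by
          have := ENNReal.toReal_eq_zero_iff (volume J) |>.mp hmz.symm
          tauto
        have hIz : I = 0 := by rw [hI, Measure.restrict_eq_zero.2 this]; simp
        rw [hIz]
        nlinarith [mul_nonneg hm0 hG0]
      · set lam := Real.sqrt (m / G) with hlam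
        have hlampos : 0 < lam := Real.sqrt_pos.2 (by positivity)
        have hlamsq : lam ^ 2 = m / G := Real.sq_sqrt (by positivity)
        have hlamG : lam ^ 2 * G = m := by rw [hlamsq]; field_simp
        have hpt : ∀ t ∈ J, |g t| ≤ 1 / (2 * lam) + (lam / 2) * g t ^ 2 := by
          intro t _
          rw [← sub_nonneg]
          have heq : 1 / (2 * lam) + lam / 2 * g t ^ 2 - |g t| =
              (lam * |g t| - 1) ^ 2 / (2 * lam) := by
            rw [← sq_abs (g t)]
            field_simp
            ring_nf
          rw [heq]
          positivity
        have hint : I ≤ 1 / (2 * lam) * m + lam / 2 * G := by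
          have h1 : IntegrableOn (fun t => 1 / (2 * lam) + (lam / 2) * g t ^ 2) J := by
            exact (integrableOn_const hfin).add (hg2.const_mul _)
          calc I ≤ ∫ t in J, (1 / (2 * lam) + (lam / 2) * g t ^ 2) :=
                setIntegral_mono_on hg1.abs h1 hJ hpt
            _ = 1 / (2 * lam) * m + lam / 2 * G := by
                rw [integral_add (integrableOn_const (μ := volume) (s := J) (C := 1 / (2 * lam)) hfin) (hg2.const_mul _),
                  setIntegral_const, integral_const_mul]
                simp [hm, hG, mul_comm, measureReal_def]
        have hR : 1 / (2 * lam) * m + lam / 2 * G = lam * G := by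
          rw [← hlamG]; field_simp; ring
        rw [hR] at hint
        have h1 : I ^ 2 ≤ (lam * G) ^ 2 := by nlinarith
        have h2 : (lam * G) ^ 2 = m * G := by rw [mul_pow, ← hlamG]; ring
        linarith
  nlinarith [mul_le_mul_of_nonneg_right hμ hG0]

lemma key_bound (a b : ℝ) (hab : a < b) (g : ℝ → ℝ)
    (hg1 : IntegrableOn g (Icc a b)) (hg2 : IntegrableOn (fun t => g t ^ 2) (Icc a b))
    (c δ : ℝ) (hδ0 : 0 < δ) (hδb : δ ≤ b - a) (t : ℝ) (ht : t ∈ Icc a b) :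
    (c + ∫ s in Ioc a t, g s) ^ 2 ≤
      2 * δ * (∫ s in Ioo a b, g s ^ 2) +
        (2 / δ) * (∫ s in Ioo a b, (c + ∫ w in Ioc a s, g w) ^ 2) := by
  set P : ℝ → ℝ := fun s => c + ∫ w in Ioc a s, g w with hP
  set G : ℝ := ∫ s in Ioo a b, g s ^ 2 with hGdef
  have hG0 : 0 ≤ G := setIntegral_nonneg measurableSet_Ioo fun s _ => sq_nonneg _
  have hPc : ContinuousOn P (Icc a b) :=
    continuousOn_const.add (intervalIntegral.continuousOn_primitive hg1)
  have hP2int : IntegrableOn (fun s => P s ^ 2) (Icc a b) :=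
    ((hPc.pow 2)).integrableOn_Icc
  set u := min t (b - δ) with hu
  have hau : a ≤ u := le_min ht.1 (by linarith [ht.1])
  have hut : u ≤ t := min_le_left _ _
  have hub : u + δ ≤ b := by have := min_le_right t (b - δ); linarith
  have htu : t ≤ u + δ := by
    rcases le_total t (b - δ) with h | h
    · rw [hu, min_eq_left h]; linarith
    · rw [hu, min_eq_right h]; linarith [ht.2]
  have hsub : Icc u (u + δ) ⊆ Icc a b := Icc_subset_Icc hau hub
  -- interval integrability
  have hgI : ∀ r ∈ Icc a b, IntervalIntegrable g volume a r := by
    intro r hr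
    rw [intervalIntegrable_iff_integrableOn_Ioc_of_le hr.1]
    exact hg1.mono_set (Ioc_subset_Icc_self.trans (Icc_subset_Icc le_rfl hr.2))
  -- difference bound
  have hdiff : ∀ s ∈ Icc u (u + δ), (P t - P s) ^ 2 ≤ δ * G := by
    intro s hs
    have hsab : s ∈ Icc a b := hsub hs
    have h1 : P t - P s = ∫ w in s..t, g w := by
      simp only [hP]
      rw [add_sub_add_left_eq_sub,
        ← intervalIntegral.integral_of_le ht.1, ← intervalIntegral.integral_of_le hsab.1]
      exact intervalIntegral.integral_interval_sub_left (hgI t ht) (hgI s hsab)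
    have h2 : |∫ w in s..t, g w| ≤ ∫ w in Icc u (u + δ), |g w| := by
      rw [← Real.norm_eq_abs]
      refine le_trans (intervalIntegral.norm_integral_le_integral_norm_uIoc) ?_
      simp only [Real.norm_eq_abs]
      refine setIntegral_mono_set ((hg1.mono_set hsub).abs) ?_ ?_
      · filter_upwards with w using abs_nonneg _
      · refine HasSubset.Subset.eventuallyLE ?_
        exact Set.Ioc_subset_Icc_self.trans
          (Icc_subset_Icc (le_min hs.1 hut) (max_le hs.2 htu))
    have h3 : (∫ w in Icc u (u + δ), |g w|) ^ 2 ≤ δ * ∫ w in Icc u (u + δ), g w ^ 2 := by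
      refine cs_lemma _ measurableSet_Icc (by simp) δ ?_ g (hg1.mono_set hsub)
        (hg2.mono_set hsub)
      rw [Real.volume_Icc]
      simp [ENNReal.toReal_ofReal hδ0.le]
    have h4 : ∫ w in Icc u (u + δ), g w ^ 2 ≤ G := by
      rw [integral_Icc_eq_integral_Ioo]
      refine setIntegral_mono_set (hg2.mono_set Ioo_subset_Icc_self) ?_ ?_
      · filter_upwards with w using sq_nonneg _
      · exact HasSubset.Subset.eventuallyLE (Ioo_subset_Ioo hau (by linarith))
    have h5 : (P t - P s) ^ 2 ≤ (∫ w in Icc u (u + δ), |g w|) ^ 2 := by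
      rw [h1, ← sq_abs]
      have h0 : (0:ℝ) ≤ ∫ w in Icc u (u + δ), |g w| :=
        setIntegral_nonneg measurableSet_Icc fun w _ => abs_nonneg _
      exact pow_le_pow_left₀ (abs_nonneg _) h2 2
    nlinarith
  -- pointwise then integrate
  have hstep : ∀ s ∈ Icc u (u + δ), P t ^ 2 ≤ 2 * (δ * G) + 2 * P s ^ 2 := by
    intro s hs
    have := hdiff s hs
    nlinarith [sq_nonneg (P t - 2 * P s)]
  have hJconst : ∫ _ in Icc u (u + δ), (P t ^ 2 : ℝ) = δ * P t ^ 2 := by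
    rw [setIntegral_const, measureReal_def, Real.volume_Icc, smul_eq_mul]
    congr 1
    simp [ENNReal.toReal_ofReal hδ0.le]
  have hint : δ * P t ^ 2 ≤ δ * (2 * (δ * G)) + 2 * ∫ s in Ioo a b, P s ^ 2 := by
    have hi1 : IntegrableOn (fun _ : ℝ => P t ^ 2) (Icc u (u + δ)) :=
      integrableOn_const (by simp)
    have hi2 : IntegrableOn (fun s => 2 * (δ * G) + 2 * P s ^ 2) (Icc u (u + δ)) :=
      (integrableOn_const (by simp)).add
        ((hP2int.mono_set hsub).const_mul _)
    have hmono := setIntegral_mono_on hi1 hi2 measurableSet_Icc hstep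
    rw [hJconst] at hmono
    have heq : ∫ s in Icc u (u + δ), (2 * (δ * G) + 2 * P s ^ 2) =
        δ * (2 * (δ * G)) + 2 * ∫ s in Icc u (u + δ), P s ^ 2 := by
      rw [integral_add (integrableOn_const (μ := volume) (s := Icc u (u + δ)) (C := 2 * (δ * G)) (by simp))
        ((hP2int.mono_set hsub).const_mul _), setIntegral_const, integral_const_mul,
        measureReal_def, Real.volume_Icc, smul_eq_mul]
      congr 2
      simp [ENNReal.toReal_ofReal hδ0.le]
    rw [heq] at hmono
    have hPP : ∫ s in Icc u (u + δ), P s ^ 2 ≤ ∫ s in Ioo a b, P s ^ 2 := by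
      rw [integral_Icc_eq_integral_Ioo]
      refine setIntegral_mono_set (hP2int.mono_set Ioo_subset_Icc_self) ?_ ?_
      · filter_upwards with w using sq_nonneg _
      · exact HasSubset.Subset.eventuallyLE (Ioo_subset_Ioo hau (by linarith))
    linarith
  have hfield : 2 / δ * (∫ s in Ioo a b, P s ^ 2) * δ = 2 * ∫ s in Ioo a b, P s ^ 2 := by
    field_simp
  change P t ^ 2 ≤ 2 * δ * G + 2 / δ * ∫ s in Ioo a b, P s ^ 2
  have h6 : P t ^ 2 ≤ (δ * (2 * (δ * G)) + 2 * ∫ s in Ioo a b, P s ^ 2) / δ :=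
    (le_div_iff₀ hδ0).2 (by nlinarith [hint])
  have h7 : (δ * (2 * (δ * G)) + 2 * ∫ s in Ioo a b, P s ^ 2) / δ =
      2 * δ * G + 2 / δ * ∫ s in Ioo a b, P s ^ 2 := by
    field_simp
  linarith

end Helpers

noncomputable section

/-- A function that is *piecewise `H¹`* with respect to the partition points
`x 0 < x 1 < x 2 < ⋯` of `[0,∞)`: on each interval `Δ_{k+1} = [x k, x (k+1)]` it is
absolutely continuous with derivative `f' ∈ L²`, encoded via the fundamental
theorem of calculus; `fr k = f(x k +)` and `fl (k+1) = f(x (k+1) −)` are the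
one-sided limits at the nodes. -/
structure PW1 (x : ℕ → ℝ) where
  f : ℝ → ℝ
  f' : ℝ → ℝ
  fr : ℕ → ℝ
  fl : ℕ → ℝ
  int_d : ∀ k, IntegrableOn f' (Icc (x k) (x (k + 1))) volume
  sq_d : ∀ k, IntegrableOn (fun t => f' t ^ 2) (Icc (x k) (x (k + 1))) volume
  ftc : ∀ k, ∀ t ∈ Ioo (x k) (x (k + 1)), f t = fr k + ∫ s in Ioc (x k) t, f' s
  fl_eq : ∀ k, fl (k + 1) = fr k + ∫ s in Ioc (x k) (x (k + 1)), f' s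

/-- The jump `f(x_{k+1}+) − f(x_{k+1}−)` of a piecewise `H¹` function at the
interior node `x (k+1)` (the paper's node `x_{k+1}`). -/
def PW1.jump {x : ℕ → ℝ} (F : PW1 x) (k : ℕ) : ℝ := F.fr (k + 1) - F.fl (k + 1)

/-- Membership in the domain of the form `t_{X,β,q}`: `f ∈ L²(0,∞)`,
`∫₀^∞ |f'|² < ∞`, `∫₀^∞ |q| |f|² < ∞` and `Σ_k |f(x_k+) − f(x_k−)|²/|β_k| < ∞`. -/
def MemDom (x : ℕ → ℝ) (q : ℝ → ℝ) (β : ℕ → ℝ) (F : PW1 x) : Prop :=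
  IntegrableOn (fun t => F.f t ^ 2) (Ioi 0) volume ∧
  IntegrableOn (fun t => F.f' t ^ 2) (Ioi 0) volume ∧
  IntegrableOn (fun t => |q t| * F.f t ^ 2) (Ioi 0) volume ∧
  Summable (fun k => F.jump k ^ 2 / |β (k + 1)|)

/-- The value of the quadratic form
`t_{X,β,q}[f] = ∫₀^∞ (|f'|² + q |f|²) dx + Σ_k |f(x_k+) − f(x_k−)|²/β_k`. -/
def formVal (x : ℕ → ℝ) (q : ℝ → ℝ) (β : ℕ → ℝ) (F : PW1 x) : ℝ :=
  (∫ t in Ioi (0 : ℝ), (F.f' t ^ 2 + q t * F.f t ^ 2)) +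
    ∑' k, F.jump k ^ 2 / β (k + 1)


set_option maxHeartbeats 2000000 in
/-- **Lemma 2.4(i)**: if `d^* < ∞`, `sup_k (1/d_k)∫_Δₖ |q| = C₀ < ∞` and
`sup_k |β_k|⁻¹/min(d_k,d_{k+1}) = C₁ < ∞`, then the forms `q` and `b_X` are
infinitesimally form bounded with respect to the broken Dirichlet form. -/
theorem stmt_18 (x : ℕ → ℝ) (hx0 : x 0 = 0) (hmono : StrictMono x)
    (hxtop : Tendsto x atTop atTop)
    (q : ℝ → ℝ) (hq : ∀ a b : ℝ, 0 ≤ a → IntegrableOn q (Icc a b) volume)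
    (β : ℕ → ℝ) (hβ : ∀ k, β (k + 1) ≠ 0)
    (D : ℝ) (hD : ∀ k, x (k + 1) - x k ≤ D)
    (C₀ C₁ : ℝ)
    (habs : ∀ k, (1 / (x (k + 1) - x k)) *
      (∫ t in Icc (x k) (x (k + 1)), |q t|) ≤ C₀)
    (hb : ∀ k, |β (k + 1)|⁻¹ ≤
      C₁ * min (x (k + 1) - x k) (x (k + 2) - x (k + 1))) :
    ∀ ε > 0, ∃ Cε > 0, ∀ F : PW1 x,
      Summable (fun k => ∫ t in Ioo (x k) (x (k + 1)), (F.f' t ^ 2 + F.f t ^ 2)) →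
      (IntegrableOn (fun t => |q t| * F.f t ^ 2) (Ioi 0) volume ∧
        Summable (fun k => F.jump k ^ 2 / |β (k + 1)|) ∧
        (∫ t in Ioi (0 : ℝ), |q t| * F.f t ^ 2) +
            (∑' k, F.jump k ^ 2 / |β (k + 1)|) ≤
          ε * (∑' k, ∫ t in Ioo (x k) (x (k + 1)), (F.f' t ^ 2 + F.f t ^ 2)) +
            Cε * ∫ t in Ioi (0 : ℝ), F.f t ^ 2) := by
  -- basic positivity facts
  have hd : ∀ k, 0 < x (k + 1) - x k := fun k => sub_pos.2 (hmono (Nat.lt_succ_self k))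
  have hD0 : 0 < D := lt_of_lt_of_le (hd 0) (hD 0)
  have hC₀ : 0 ≤ C₀ := le_trans (mul_nonneg (one_div_nonneg.2 (hd 0).le)
      (setIntegral_nonneg measurableSet_Icc fun t _ => abs_nonneg _)) (habs 0)
  have hC₁ : 0 ≤ C₁ := by
    have h1 := hb 0
    have h2 : 0 < |β 1|⁻¹ := inv_pos.2 (abs_pos.2 (hβ 0))
    have h3 : 0 < min (x 1 - x 0) (x 2 - x 1) := lt_min (hd 0) (hd 1)
    nlinarith
  have ha0 : ∀ k, 0 ≤ x k := fun k => hx0 ▸ hmono.monotone (Nat.zero_le k)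
  intro ε hε
  -- choose η and Cε
  obtain ⟨K, hK⟩ : ∃ K : ℝ, K = (2 * C₀ + 8 * C₁) * D + 1 := ⟨_, rfl⟩
  have hK1 : 1 ≤ K := by rw [hK]; nlinarith
  have hK0 : 0 < K := by linarith
  obtain ⟨η, hη⟩ : ∃ η : ℝ, η = ε / K := ⟨_, rfl⟩
  have hη0 : 0 < η := hη ▸ div_pos hε hK0
  refine ⟨(2 * C₀ + 8 * C₁) * (1 + D / η) + 1, by positivity, ?_⟩
  intro F hsum
  -- per-interval notation
  set δ : ℕ → ℝ := fun k => min (x (k + 1) - x k) η with hδdef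
  have hδ0 : ∀ k, 0 < δ k := fun k => lt_min (hd k) hη0
  have hδd : ∀ k, δ k ≤ x (k + 1) - x k := fun k => min_le_left _ _
  have hδη : ∀ k, δ k ≤ η := fun k => min_le_right _ _
  set P : ℕ → ℝ → ℝ := fun k s => F.fr k + ∫ w in Ioc (x k) s, F.f' w with hPdef
  set A : ℕ → ℝ := fun k => ∫ t in Ioo (x k) (x (k + 1)), F.f' t ^ 2 with hAdef
  set B : ℕ → ℝ := fun k => ∫ t in Ioo (x k) (x (k + 1)), F.f t ^ 2 with hBdef
  set S : ℕ → ℝ := fun k => 2 * δ k * A k + (2 / δ k) * B k with hSdef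
  have hA0 : ∀ k, 0 ≤ A k := fun k =>
    setIntegral_nonneg measurableSet_Ioo fun t _ => sq_nonneg _
  have hB0 : ∀ k, 0 ≤ B k := fun k =>
    setIntegral_nonneg measurableSet_Ioo fun t _ => sq_nonneg _
  have hS0 : ∀ k, 0 ≤ S k := fun k => by
    have h1 := (hδ0 k).le; have h2 := hA0 k; have h3 := hB0 k
    have h5 : (0:ℝ) ≤ 2 / δ k := div_nonneg (by norm_num) h1
    exact add_nonneg (mul_nonneg (mul_nonneg (by norm_num) h1) h2) (mul_nonneg h5 h3)
  have hPf : ∀ k, EqOn F.f (P k) (Ioo (x k) (x (k + 1))) := fun k t ht => F.ftc k t ht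
  have hB_eq : ∀ k, B k = ∫ t in Ioo (x k) (x (k + 1)), P k t ^ 2 := fun k =>
    setIntegral_congr_fun measurableSet_Ioo fun t ht => by rw [hPf k ht]
  -- the key sup bound
  have hkey : ∀ k, ∀ t ∈ Icc (x k) (x (k + 1)), P k t ^ 2 ≤ S k := by
    intro k t ht
    have h := key_bound (x k) (x (k + 1)) (hmono (Nat.lt_succ_self k)) F.f'
      (F.int_d k) (F.sq_d k) (F.fr k) (δ k) (hδ0 k) (hδd k) t ht
    rw [hSdef]
    simp only
    rw [hB_eq k]
    exact h
  have hfr : ∀ k, F.fr k = P k (x k) := by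
    intro k
    simp [hPdef]
  have hfl : ∀ k, F.fl (k + 1) = P k (x (k + 1)) := fun k => F.fl_eq k
  have hSf : ∀ k, ∀ t ∈ Ioo (x k) (x (k + 1)), F.f t ^ 2 ≤ S k := by
    intro k t ht
    rw [hPf k ht]
    exact hkey k t (Ioo_subset_Icc_self ht)
  have hSfr : ∀ k, F.fr k ^ 2 ≤ S k := by
    intro k
    rw [hfr k]
    exact hkey k (x k) (left_mem_Icc.2 (hmono (Nat.lt_succ_self k)).le)
  have hSfl : ∀ k, F.fl (k + 1) ^ 2 ≤ S k := by
    intro k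
    rw [hfl k]
    exact hkey k (x (k + 1)) (right_mem_Icc.2 (hmono (Nat.lt_succ_self k)).le)
  -- integrability on each interval
  have hf'2int : ∀ k, IntegrableOn (fun t => F.f' t ^ 2) (Ioo (x k) (x (k + 1))) :=
    fun k => (F.sq_d k).mono_set Ioo_subset_Icc_self
  have hPcont : ∀ k, ContinuousOn (P k) (Icc (x k) (x (k + 1))) := fun k =>
    continuousOn_const.add (intervalIntegral.continuousOn_primitive (F.int_d k))
  have hf2int : ∀ k, IntegrableOn (fun t => F.f t ^ 2) (Ioo (x k) (x (k + 1))) := by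
    intro k
    have h1 : IntegrableOn (fun t => P k t ^ 2) (Icc (x k) (x (k + 1))) :=
      ((hPcont k).pow 2).integrableOn_Icc
    exact (h1.mono_set Ioo_subset_Icc_self).congr_fun
      (fun t ht => by rw [hPf k ht]) measurableSet_Ioo
  have hE : ∀ k, (∫ t in Ioo (x k) (x (k + 1)), (F.f' t ^ 2 + F.f t ^ 2)) = A k + B k :=
    fun k => integral_add (hf'2int k) (hf2int k)
  have hEsum : Summable (fun k => A k + B k) := hsum.congr hE
  have hAsum : Summable A :=
    Summable.of_nonneg_of_le hA0 (fun k => le_add_of_nonneg_right (hB0 k)) hEsum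
  have hBsum : Summable B :=
    Summable.of_nonneg_of_le hB0 (fun k => le_add_of_nonneg_left (hA0 k)) hEsum
  have hA1sum : Summable (fun k => A (k + 1)) :=
    hAsum.comp_injective (add_left_injective 1)
  have hB1sum : Summable (fun k => B (k + 1)) :=
    hBsum.comp_injective (add_left_injective 1)
  -- the scalar workhorse: m * S k ≤ 2(Dη) A k + 2(1+D/η) B k for 0 ≤ m ≤ d k
  have hratio : ∀ k, (x (k + 1) - x k) / δ k ≤ 1 + D / η := by
    intro k
    rcases le_total (x (k + 1) - x k) η with h | h
    · have : δ k = x (k + 1) - x k := min_eq_left h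
      rw [this, div_self (hd k).ne']
      have : 0 ≤ D / η := by positivity
      linarith
    · have : δ k = η := min_eq_right h
      rw [this]
      have h2 : (x (k + 1) - x k) / η ≤ D / η := by gcongr; exact hD k
      linarith
  have hmS : ∀ k (m : ℝ), 0 ≤ m → m ≤ x (k + 1) - x k →
      m * S k ≤ 2 * (D * η) * A k + 2 * (1 + D / η) * B k := by
    intro k m hm0 hmd
    have h1 : m * δ k ≤ D * η :=
      mul_le_mul (hmd.trans (hD k)) (hδη k) (hδ0 k).le hD0.le
    have h2 : m / δ k ≤ 1 + D / η := by
      refine le_trans ?_ (hratio k)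
      gcongr
      exact (hδ0 k).le
    have h3 : m * S k = 2 * (m * δ k) * A k + 2 * (m / δ k) * B k := by
      rw [hSdef]; simp only; ring
    rw [h3]
    have := hA0 k; have := hB0 k
    gcongr
  -- potential part, per interval
  have hqIcc : ∀ k, IntegrableOn (fun t => |q t|) (Icc (x k) (x (k + 1))) := fun k =>
    (hq (x k) (x (k + 1)) (ha0 k)).abs
  have hqIoo : ∀ k, IntegrableOn (fun t => |q t|) (Ioo (x k) (x (k + 1))) := fun k =>
    (hqIcc k).mono_set Ioo_subset_Icc_self
  have hqfint : ∀ k, IntegrableOn (fun t => |q t| * F.f t ^ 2) (Ioo (x k) (x (k + 1))) := by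
    intro k
    refine Integrable.mono' ((hqIoo k).const_mul (S k)) ?_ ?_
    · exact ((hqIoo k).1.mul (hf2int k).1)
    · refine (ae_restrict_iff' measurableSet_Ioo).2 (ae_of_all _ ?_)
      intro t ht
      rw [Real.norm_of_nonneg (mul_nonneg (abs_nonneg _) (sq_nonneg _))]
      rw [mul_comm (S k) (|q t|)]
      exact mul_le_mul_of_nonneg_left (hSf k t ht) (abs_nonneg _)
  have hqb : ∀ k, (∫ t in Ioo (x k) (x (k + 1)), |q t| * F.f t ^ 2) ≤
      2 * C₀ * (D * η) * A k + 2 * C₀ * (1 + D / η) * B k := by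
    intro k
    have step1 : (∫ t in Ioo (x k) (x (k + 1)), |q t| * F.f t ^ 2) ≤
        ∫ t in Ioo (x k) (x (k + 1)), S k * |q t| := by
      refine setIntegral_mono_on (hqfint k) ((hqIoo k).const_mul (S k))
        measurableSet_Ioo ?_
      intro t ht
      rw [mul_comm (S k) (|q t|)]
      exact mul_le_mul_of_nonneg_left (hSf k t ht) (abs_nonneg _)
    have step2 : (∫ t in Ioo (x k) (x (k + 1)), S k * |q t|) =
        S k * ∫ t in Icc (x k) (x (k + 1)), |q t| := by
      rw [integral_const_mul, integral_Icc_eq_integral_Ioo]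
    have step3 : (∫ t in Icc (x k) (x (k + 1)), |q t|) ≤ C₀ * (x (k + 1) - x k) := by
      have h := habs k
      have hdk := hd k
      have hfe : (1 / (x (k + 1) - x k)) * (∫ t in Icc (x k) (x (k + 1)), |q t|) *
          (x (k + 1) - x k) = ∫ t in Icc (x k) (x (k + 1)), |q t| := by
        field_simp
      nlinarith [setIntegral_nonneg (μ := volume) (measurableSet_Icc :
        MeasurableSet (Icc (x k) (x (k + 1)))) (fun t (_ : t ∈ Icc (x k) (x (k+1))) => abs_nonneg (q t))]
    have step4 : S k * (C₀ * (x (k + 1) - x k)) =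
        C₀ * ((x (k + 1) - x k) * S k) := by ring
    have step5 : (x (k + 1) - x k) * S k ≤
        2 * (D * η) * A k + 2 * (1 + D / η) * B k := hmS k _ (hd k).le le_rfl
    calc (∫ t in Ioo (x k) (x (k + 1)), |q t| * F.f t ^ 2)
        ≤ S k * ∫ t in Icc (x k) (x (k + 1)), |q t| := by rw [← step2]; exact step1
      _ ≤ S k * (C₀ * (x (k + 1) - x k)) :=
          mul_le_mul_of_nonneg_left step3 (hS0 k)
      _ = C₀ * ((x (k + 1) - x k) * S k) := step4
      _ ≤ C₀ * (2 * (D * η) * A k + 2 * (1 + D / η) * B k) :=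
          mul_le_mul_of_nonneg_left step5 hC₀
      _ = 2 * C₀ * (D * η) * A k + 2 * C₀ * (1 + D / η) * B k := by ring
  -- jump part, per interval
  have hjb : ∀ k, F.jump k ^ 2 / |β (k + 1)| ≤
      4 * C₁ * (D * η) * A k + 4 * C₁ * (D * η) * A (k + 1) +
      4 * C₁ * (1 + D / η) * B k + 4 * C₁ * (1 + D / η) * B (k + 1) := by
    intro k
    set m : ℝ := min (x (k + 1) - x k) (x (k + 2) - x (k + 1)) with hm
    have hm0 : 0 ≤ m := le_min (hd k).le (hd (k + 1)).le
    have hj2 : F.jump k ^ 2 ≤ 2 * S k + 2 * S (k + 1) := by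
      have h1 := hSfl k
      have h2 := hSfr (k + 1)
      rw [show F.jump k = F.fr (k + 1) - F.fl (k + 1) from rfl]
      nlinarith [sq_nonneg (F.fr (k + 1) + F.fl (k + 1)), h1, h2]
    have hchain : F.jump k ^ 2 / |β (k + 1)| ≤ (2 * S k + 2 * S (k + 1)) * (C₁ * m) := by
      rw [div_eq_mul_inv]
      calc F.jump k ^ 2 * |β (k + 1)|⁻¹ ≤ F.jump k ^ 2 * (C₁ * m) :=
            mul_le_mul_of_nonneg_left (hb k) (sq_nonneg _)
        _ ≤ (2 * S k + 2 * S (k + 1)) * (C₁ * m) :=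
            mul_le_mul_of_nonneg_right hj2 (mul_nonneg hC₁ hm0)
    have hms1 : m * S k ≤ 2 * (D * η) * A k + 2 * (1 + D / η) * B k :=
      hmS k m hm0 (min_le_left _ _)
    have hms2 : m * S (k + 1) ≤ 2 * (D * η) * A (k + 1) + 2 * (1 + D / η) * B (k + 1) :=
      hmS (k + 1) m hm0 (min_le_right _ _)
    have hexp : (2 * S k + 2 * S (k + 1)) * (C₁ * m) =
        2 * C₁ * (m * S k) + 2 * C₁ * (m * S (k + 1)) := by ring
    rw [hexp] at hchain
    have e1 : 2 * C₁ * (m * S k) ≤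
        2 * C₁ * (2 * (D * η) * A k + 2 * (1 + D / η) * B k) :=
      mul_le_mul_of_nonneg_left hms1 (by positivity)
    have e2 : 2 * C₁ * (m * S (k + 1)) ≤
        2 * C₁ * (2 * (D * η) * A (k + 1) + 2 * (1 + D / η) * B (k + 1)) :=
      mul_le_mul_of_nonneg_left hms2 (by positivity)
    nlinarith
  -- summability of the two parts
  have hbnd1sum : Summable (fun k => 2 * C₀ * (D * η) * A k + 2 * C₀ * (1 + D / η) * B k) :=
    (hAsum.mul_left _).add (hBsum.mul_left _)
  have hqnonneg : ∀ k, 0 ≤ ∫ t in Ioo (x k) (x (k + 1)), |q t| * F.f t ^ 2 := fun k =>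
    setIntegral_nonneg measurableSet_Ioo fun t _ =>
      mul_nonneg (abs_nonneg _) (sq_nonneg _)
  have hqsum : Summable (fun k => ∫ t in Ioo (x k) (x (k + 1)), |q t| * F.f t ^ 2) :=
    Summable.of_nonneg_of_le hqnonneg hqb hbnd1sum
  have hjnonneg : ∀ k, 0 ≤ F.jump k ^ 2 / |β (k + 1)| := fun k =>
    div_nonneg (sq_nonneg _) (abs_nonneg _)
  have hbnd2sum : Summable (fun k =>
      4 * C₁ * (D * η) * A k + 4 * C₁ * (D * η) * A (k + 1) +
      4 * C₁ * (1 + D / η) * B k + 4 * C₁ * (1 + D / η) * B (k + 1)) :=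
    (((hAsum.mul_left _).add (hA1sum.mul_left _)).add (hBsum.mul_left _)).add
      (hB1sum.mul_left _)
  have hjsum : Summable (fun k => F.jump k ^ 2 / |β (k + 1)|) :=
    Summable.of_nonneg_of_le hjnonneg hjb hbnd2sum
  -- the union decomposition of (0,∞)
  set U : Set ℝ := ⋃ k, Ioo (x k) (x (k + 1)) with hU
  have hUmeas : ∀ k, MeasurableSet (Ioo (x k) (x (k + 1))) := fun k => measurableSet_Ioo
  have hUdisj : Pairwise (Function.onFun Disjoint fun k => Ioo (x k) (x (k + 1))) := by
    intro i j hij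
    rcases hij.lt_or_gt with h | h
    · refine Set.disjoint_left.2 fun t ht ht' => ?_
      have h1 : t < x (i + 1) := ht.2
      have h2 : x j < t := ht'.1
      have h3 : x (i + 1) ≤ x j := hmono.monotone h
      linarith
    · refine Set.disjoint_left.2 fun t ht ht' => ?_
      have h1 : t < x (j + 1) := ht'.2
      have h2 : x i < t := ht.1
      have h3 : x (j + 1) ≤ x i := hmono.monotone h
      linarith
  have hUae : (Ioi (0 : ℝ)) =ᵐ[volume] U := by
    rw [MeasureTheory.ae_eq_set]
    constructor
    · have hsubset : Ioi (0 : ℝ) \ U ⊆ Set.range x := by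
        intro t ht
        obtain ⟨ht0, htU⟩ := ht
        have ht0' : (0 : ℝ) < t := ht0
        have hex : ∃ n, t ≤ x n := by
          rcases (hxtop.eventually (eventually_ge_atTop t)).exists with ⟨n, hn⟩
          exact ⟨n, hn⟩
        classical
        set n := Nat.find hex with hn
        have hn1 : t ≤ x n := Nat.find_spec hex
        have hnpos : n ≠ 0 := by
          intro h0
          rw [h0, hx0] at hn1
          linarith
        obtain ⟨m, hm⟩ := Nat.exists_eq_succ_of_ne_zero hnpos
        have hm1 : ¬ t ≤ x m := Nat.find_min hex (by omega)
        push_neg at hm1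
        rcases lt_or_eq_of_le hn1 with hlt | heq
        · exfalso
          apply htU
          rw [hm] at hlt
          exact Set.mem_iUnion.2 ⟨m, ⟨hm1, hlt⟩⟩
        · exact ⟨n, heq.symm⟩
      exact measure_mono_null hsubset (Set.Countable.measure_zero (Set.countable_range x) _)
    · have : U \ Ioi (0 : ℝ) = ∅ := by
        refine Set.diff_eq_empty.2 ?_
        intro t ht
        obtain ⟨k, hk⟩ := Set.mem_iUnion.1 ht
        have : (0 : ℝ) ≤ x k := ha0 k
        exact lt_of_le_of_lt this hk.1
      rw [this]
      simp
  -- integrability on (0,∞) and total integrals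
  have hnorm_eq : ∀ (g : ℝ → ℝ), (∀ t, 0 ≤ g t) → ∀ k,
      (∫ t in Ioo (x k) (x (k + 1)), ‖g t‖) = ∫ t in Ioo (x k) (x (k + 1)), g t := by
    intro g hg k
    refine setIntegral_congr_fun measurableSet_Ioo fun t _ => ?_
    rw [Real.norm_of_nonneg (hg t)]
  have hf2U : IntegrableOn (fun t => F.f t ^ 2) U := by
    refine integrableOn_iUnion_of_summable_integral_norm hf2int ?_
    refine hBsum.congr fun k => ?_
    exact (hnorm_eq (fun t => F.f t ^ 2) (fun t => sq_nonneg _) k).symm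
  have hf2Ioi : IntegrableOn (fun t => F.f t ^ 2) (Ioi 0) := hf2U.congr_set_ae hUae
  have hBtot : (∫ t in Ioi (0 : ℝ), F.f t ^ 2) = ∑' k, B k := by
    rw [setIntegral_congr_set hUae]
    exact integral_iUnion hUmeas hUdisj hf2U
  have hqU : IntegrableOn (fun t => |q t| * F.f t ^ 2) U := by
    refine integrableOn_iUnion_of_summable_integral_norm hqfint ?_
    refine hqsum.congr fun k => ?_
    exact (hnorm_eq (fun t => |q t| * F.f t ^ 2)
      (fun t => mul_nonneg (abs_nonneg _) (sq_nonneg _)) k).symm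
  have hqIoi : IntegrableOn (fun t => |q t| * F.f t ^ 2) (Ioi 0) := hqU.congr_set_ae hUae
  have hqtot : (∫ t in Ioi (0 : ℝ), |q t| * F.f t ^ 2) =
      ∑' k, ∫ t in Ioo (x k) (x (k + 1)), |q t| * F.f t ^ 2 := by
    rw [setIntegral_congr_set hUae]
    exact integral_iUnion hUmeas hUdisj hqU
  refine ⟨hqIoi, hjsum, ?_⟩
  -- final estimate
  have hAshift : (∑' k, A (k + 1)) ≤ ∑' k, A k :=
    Summable.tsum_le_tsum_of_inj (fun k => k + 1) (add_left_injective 1)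
      (fun c _ => hA0 c) (fun k => le_rfl) hA1sum hAsum
  have hBshift : (∑' k, B (k + 1)) ≤ ∑' k, B k :=
    Summable.tsum_le_tsum_of_inj (fun k => k + 1) (add_left_injective 1)
      (fun c _ => hB0 c) (fun k => le_rfl) hB1sum hBsum
  have hq_t : (∫ t in Ioi (0 : ℝ), |q t| * F.f t ^ 2) ≤
      2 * C₀ * (D * η) * (∑' k, A k) + 2 * C₀ * (1 + D / η) * (∑' k, B k) := by
    rw [hqtot]
    calc (∑' k, ∫ t in Ioo (x k) (x (k + 1)), |q t| * F.f t ^ 2)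
        ≤ ∑' k, (2 * C₀ * (D * η) * A k + 2 * C₀ * (1 + D / η) * B k) :=
          Summable.tsum_le_tsum hqb hqsum hbnd1sum
      _ = 2 * C₀ * (D * η) * (∑' k, A k) + 2 * C₀ * (1 + D / η) * (∑' k, B k) := by
          rw [Summable.tsum_add (hAsum.mul_left _) (hBsum.mul_left _), tsum_mul_left, tsum_mul_left]
  have hj_t : (∑' k, F.jump k ^ 2 / |β (k + 1)|) ≤
      8 * C₁ * (D * η) * (∑' k, A k) + 8 * C₁ * (1 + D / η) * (∑' k, B k) := by
    calc (∑' k, F.jump k ^ 2 / |β (k + 1)|)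
        ≤ ∑' k, (4 * C₁ * (D * η) * A k + 4 * C₁ * (D * η) * A (k + 1) +
            4 * C₁ * (1 + D / η) * B k + 4 * C₁ * (1 + D / η) * B (k + 1)) :=
          Summable.tsum_le_tsum hjb hjsum hbnd2sum
      _ = 4 * C₁ * (D * η) * (∑' k, A k) + 4 * C₁ * (D * η) * (∑' k, A (k + 1)) +
            4 * C₁ * (1 + D / η) * (∑' k, B k) +
            4 * C₁ * (1 + D / η) * (∑' k, B (k + 1)) := by
          rw [Summable.tsum_add (((hAsum.mul_left _).add (hA1sum.mul_left _)).add
              (hBsum.mul_left _)) (hB1sum.mul_left _),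
            Summable.tsum_add ((hAsum.mul_left _).add (hA1sum.mul_left _)) (hBsum.mul_left _),
            Summable.tsum_add (hAsum.mul_left _) (hA1sum.mul_left _),
            tsum_mul_left, tsum_mul_left, tsum_mul_left, tsum_mul_left]
      _ ≤ 8 * C₁ * (D * η) * (∑' k, A k) + 8 * C₁ * (1 + D / η) * (∑' k, B k) := by
          have hDη : (0:ℝ) ≤ D / η := div_nonneg hD0.le hη0.le
          have h1 : 0 ≤ 4 * C₁ * (D * η) :=
            mul_nonneg (by linarith) (mul_nonneg hD0.le hη0.le)
          have h2 : (0:ℝ) ≤ 4 * C₁ * (1 + D / η) :=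
            mul_nonneg (by linarith) (by linarith)
          linarith [mul_le_mul_of_nonneg_left hAshift h1,
            mul_le_mul_of_nonneg_left hBshift h2]
  have hEtot : (∑' k, ∫ t in Ioo (x k) (x (k + 1)), (F.f' t ^ 2 + F.f t ^ 2)) =
      (∑' k, A k) + (∑' k, B k) := by
    rw [tsum_congr hE, Summable.tsum_add hAsum hBsum]
  have hAle : (∑' k, A k) ≤ (∑' k, A k) + (∑' k, B k) :=
    le_add_of_nonneg_right (tsum_nonneg hB0)
  have hAt0 : 0 ≤ ∑' k, A k := tsum_nonneg hA0
  have hBt0 : 0 ≤ ∑' k, B k := tsum_nonneg hB0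
  -- coefficient arithmetic
  have hcoefA : (2 * C₀ + 8 * C₁) * (D * η) ≤ ε := by
    have hKε : K * η = ε := by
      rw [hη]
      field_simp
    have hle : ((2 * C₀ + 8 * C₁) * D) * η ≤ K * η := by
      have h1 : (2 * C₀ + 8 * C₁) * D ≤ K := by rw [hK]; linarith
      exact mul_le_mul_of_nonneg_right h1 hη0.le
    linarith [hle, hKε]
  have final1 : (2 * C₀ * (D * η) + 8 * C₁ * (D * η)) * (∑' k, A k) ≤ ε * (∑' k, A k) := by
    have : 2 * C₀ * (D * η) + 8 * C₁ * (D * η) = (2 * C₀ + 8 * C₁) * (D * η) := by ring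
    rw [this]
    exact mul_le_mul_of_nonneg_right hcoefA hAt0
  have final2 : ε * (∑' k, A k) ≤ ε * ((∑' k, A k) + (∑' k, B k)) :=
    mul_le_mul_of_nonneg_left hAle hε.le
  have final3 : (2 * C₀ * (1 + D / η) + 8 * C₁ * (1 + D / η)) * (∑' k, B k) ≤
      ((2 * C₀ + 8 * C₁) * (1 + D / η) + 1) * (∑' k, B k) := by
    refine mul_le_mul_of_nonneg_right ?_ hBt0
    nlinarith
  have hEmul : ε * (∑' k, ∫ t in Ioo (x k) (x (k + 1)), (F.f' t ^ 2 + F.f t ^ 2)) =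
      ε * ((∑' k, A k) + (∑' k, B k)) := by rw [hEtot]
  have hBmul : ((2 * C₀ + 8 * C₁) * (1 + D / η) + 1) * (∫ t in Ioi (0 : ℝ), F.f t ^ 2) =
      ((2 * C₀ + 8 * C₁) * (1 + D / η) + 1) * (∑' k, B k) := by rw [hBtot]
  linarith [hq_t, hj_t, hEmul, hBmul]

end
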